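/- Let d > 1 be a square-free integer and let ε_d = x + y√d be the fundamental unit of Q(√d), where x and y are integers or half-integers. If the norm N(ε_d) = x² − d·y² = 1, then none of 2(x+1), 2(x−1), 2d(x+1), 2d(x−1) is the square of a rational number. -/

import Mathlib

noncomputable section

/-- `x + y√d` is an algebraic integer of `ℚ(√d)`:
either `x, y` are both integers, or `d ≡ 1 (mod 4)` and `x, y` are both half-integers. -/
def IsQuadInt (d : ℤ) (x y : ℚ) : Prop :=
  (∃ a b : ℤ, x = a ∧ y = b) ∨
  (d % 4 = 1 ∧ ∃ a b : ℤ, x = a + 1/2 ∧ y = b + 1/2)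

/-- `x + y√d` is the fundamental unit of the real quadratic field `ℚ(√d)`:
it is an algebraic integer of norm `±1`, greater than `1`, and minimal with
these properties. -/
def IsFundUnit (d : ℤ) (x y : ℚ) : Prop :=
  IsQuadInt d x y ∧ (x ^ 2 - d * y ^ 2 = 1 ∨ x ^ 2 - d * y ^ 2 = -1) ∧
  1 < (x : ℝ) + y * Real.sqrt d ∧
  ∀ x' y' : ℚ, IsQuadInt d x' y' →
    (x' ^ 2 - d * y' ^ 2 = 1 ∨ x' ^ 2 - d * y' ^ 2 = -1) →
    1 < (x' : ℝ) + y' * Real.sqrt d →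
    (x : ℝ) + y * Real.sqrt d ≤ (x' : ℝ) + y' * Real.sqrt d


lemma sq_int' (q : ℚ) (n : ℤ) (h : q^2 = (n:ℚ)) : ∃ m : ℤ, q = (m:ℚ) := by
  have hden : (q^2).den = 1 := by rw [h]; exact Rat.den_intCast n
  rw [Rat.den_pow] at hden
  have : q.den = 1 := by nlinarith [q.pos]
  exact ⟨q.num, by rw [← Rat.num_div_den q, this]; simp⟩

lemma sqfree_int' (d : ℤ) (hsf : Squarefree d) (q : ℚ) (n : ℤ)
    (h : (d:ℚ)*q^2 = (n:ℚ)) : ∃ m : ℤ, q = (m:ℚ) := by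
  have hq : (q:ℚ) = (q.num : ℚ) / (q.den : ℚ) := (Rat.num_div_den q).symm
  have hden0 : ((q.den : ℚ)) ≠ 0 := by exact_mod_cast q.den_nz
  have key : (d : ℚ) * (q.num:ℚ)^2 = (n:ℚ) * (q.den:ℚ)^2 := by
    rw [hq] at h; field_simp at h; linarith [h]
  have keyZ : d * q.num^2 = n * (q.den:ℤ)^2 := by exact_mod_cast key
  have hdvd : ((q.den:ℤ))^2 ∣ d * q.num^2 := ⟨n, by linarith [keyZ]⟩
  have hcop : IsCoprime ((q.den:ℤ)) q.num := by
    rw [Int.isCoprime_iff_gcd_eq_one, Int.gcd_comm]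
    exact q.reduced
  have hdvd2 : ((q.den:ℤ))^2 ∣ d :=
    (hcop.pow (m := 2) (n := 2)).dvd_of_dvd_mul_right hdvd
  have hunit : IsUnit ((q.den:ℤ)) := hsf _ (by rwa [← sq])
  have : q.den = 1 := by
    have := Int.isUnit_iff.mp hunit
    omega
  exact ⟨q.num, by rw [← Rat.num_div_den q, this]; simp⟩

lemma parity' (d : ℤ) (hsf : Squarefree d) (u v : ℚ) (A B : ℤ)
    (hA : 2*u = (A:ℚ)) (hB : 2*v = (B:ℚ))
    (h4 : A^2 - d*B^2 = 4 ∨ A^2 - d*B^2 = -4) : IsQuadInt d u v := by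
  have not4 : ¬ ((2:ℤ)*2 ∣ d) := fun hdvd => by
    have := Int.isUnit_iff.mp (hsf 2 hdvd); omega
  rcases Int.even_or_odd A with ⟨a, ha⟩ | ⟨a, ha⟩ <;>
    rcases Int.even_or_odd B with ⟨b, hb⟩ | ⟨b, hb⟩
  · exact Or.inl ⟨a, b, by
      constructor
      · have : (2:ℚ)*u = 2*a := by rw [hA, ha]; push_cast; ring
        linarith
      · have : (2:ℚ)*v = 2*b := by rw [hB, hb]; push_cast; ring
        linarith⟩
  · exfalso
    apply not4
    rcases h4 with h4 | h4
    · exact ⟨a^2 - d*b^2 - d*b - 1, by subst ha hb; ring_nf; ring_nf at h4; linarith⟩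
    · exact ⟨a^2 - d*b^2 - d*b + 1, by subst ha hb; ring_nf; ring_nf at h4; linarith⟩
  · exfalso
    subst ha hb
    have h4' : (2*a+1)^2 - d*(b+b)^2 = 4 ∨ (2*a+1)^2 - d*(b+b)^2 = -4 := h4
    have e1 : (2*a+1)^2 = 4*(a^2+a) + 1 := by ring
    have e2 : d*(b+b)^2 = 4*(d*b^2) := by ring
    rcases h4' with h4 | h4 <;> omega
  · subst ha hb
    have hd4 : d % 4 = 1 := by
      have e1 : (2*a+1)^2 = 4*(a^2+a) + 1 := by ring
      have e2 : d*(2*b+1)^2 = 4*(d*(b^2+b)) + d := by ring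
      rcases h4 with h4 | h4 <;> omega
    refine Or.inr ⟨hd4, a, b, ?_, ?_⟩
    · have : (2:ℚ)*u = 2*a+1 := by rw [hA]; push_cast; ring
      linarith
    · have : (2:ℚ)*v = 2*b+1 := by rw [hB]; push_cast; ring
      linarith

lemma contra' (d : ℤ) (hd : 1 < d) (hsf : Squarefree d) (x y u v : ℚ)
    (h : IsFundUnit d x y)
    (h1 : u^2 + d*v^2 = x) (h2 : 2*(u*v) = y)
    (hpm : u^2 - d*v^2 = 1 ∨ u^2 - d*v^2 = -1)
    (hu : ∃ m : ℤ, 4*u^2 = (m:ℚ)) (hv : ∃ n : ℤ, 4*(d*v^2) = (n:ℚ))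
    (hupos : 0 < u) (hvpos : 0 < v) : False := by
  obtain ⟨m, hm⟩ := hu
  obtain ⟨n, hn⟩ := hv
  obtain ⟨A, hA⟩ := sq_int' (2*u) m (by rw [← hm]; ring)
  obtain ⟨B, hB⟩ := sqfree_int' d hsf (2*v) n (by rw [← hn]; ring)
  have h4 : A^2 - d*B^2 = 4 ∨ A^2 - d*B^2 = -4 := by
    rcases hpm with hpm | hpm
    · left
      have : ((A:ℚ))^2 - d*B^2 = 4 := by
        rw [← hA, ← hB]; linear_combination 4*hpm
      exact_mod_cast this
    · right
      have : ((A:ℚ))^2 - d*B^2 = -4 := by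
        rw [← hA, ← hB]; linear_combination 4*hpm
      exact_mod_cast this
  have hqi : IsQuadInt d u v := parity' d hsf u v A B hA hB h4
  set s := Real.sqrt d with hs
  have hd0 : (0:ℝ) ≤ (d:ℝ) := by positivity
  have hs2 : s*s = (d:ℝ) := Real.mul_self_sqrt hd0
  have hs0 : 0 < s := Real.sqrt_pos.mpr (by exact_mod_cast lt_trans one_pos hd)
  have h1' : ((u:ℝ))^2 + (d:ℝ)*(v:ℝ)^2 = (x:ℝ) := by exact_mod_cast h1
  have h2' : 2*((u:ℝ)*(v:ℝ)) = (y:ℝ) := by exact_mod_cast h2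
  have key : ((u:ℝ) + v*s)^2 = (x:ℝ) + y*s := by
    linear_combination ((v:ℝ))^2 * hs2 + h1' + s * h2'
  have heta0 : (0:ℝ) < (u:ℝ) + v*s := by
    have : (0:ℝ) < (u:ℝ) := by exact_mod_cast hupos
    have hv' : (0:ℝ) < (v:ℝ) := by exact_mod_cast hvpos
    positivity
  have heps : 1 < (x:ℝ) + y*s := h.2.2.1
  have heta1 : 1 < (u:ℝ) + v*s := by nlinarith
  have hmin := h.2.2.2 u v hqi hpm heta1
  nlinarith

/-- If `d > 1` is squarefree and the fundamental unit `ε_d = x + y√d` of `ℚ(√d)` has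
norm `1`, then none of `2(x+1)`, `2(x−1)`, `2d(x+1)`, `2d(x−1)` is the square of a
rational number. -/
theorem fundUnit_norm_one_not_squares (d : ℤ) (hd : 1 < d) (hsf : Squarefree d)
    (x y : ℚ) (h : IsFundUnit d x y) (hnorm : x ^ 2 - d * y ^ 2 = 1) :
    (¬ ∃ r : ℚ, r ^ 2 = 2 * (x + 1)) ∧ (¬ ∃ r : ℚ, r ^ 2 = 2 * (x - 1)) ∧
    (¬ ∃ r : ℚ, r ^ 2 = 2 * d * (x + 1)) ∧ (¬ ∃ r : ℚ, r ^ 2 = 2 * d * (x - 1)) := by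
  have hd0 : (0:ℚ) < (d:ℚ) := by exact_mod_cast lt_trans one_pos hd
  have hdR : (0:ℝ) ≤ (d:ℝ) := by exact_mod_cast le_of_lt (lt_trans one_pos hd)
  set s := Real.sqrt d with hs
  have hs2 : s*s = (d:ℝ) := Real.mul_self_sqrt hdR
  have hs0 : 0 < s := Real.sqrt_pos.mpr (by exact_mod_cast lt_trans one_pos hd)
  have hnorm' : ((x:ℝ))^2 - (d:ℝ)*(y:ℝ)^2 = 1 := by exact_mod_cast hnorm
  have hε : 1 < (x:ℝ) + y*s := h.2.2.1
  have hconj : ((x:ℝ) - y*s) * ((x:ℝ) + y*s) = 1 := by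
    linear_combination hnorm' - (y:ℝ)^2 * hs2
  have hCpos : 0 < (x:ℝ) - y*s := by nlinarith
  have hC1 : (x:ℝ) - y*s < 1 := by nlinarith
  have hxR : 1 < (x:ℝ) := by nlinarith
  have hyR : 0 < (y:ℝ) := by nlinarith
  have hx1 : (1:ℚ) < x := by exact_mod_cast hxR
  have hy0 : (0:ℚ) < y := by exact_mod_cast hyR
  have hdy : (d:ℚ)*y^2 = x^2 - 1 := by linarith
  obtain ⟨N, hN⟩ : ∃ N : ℤ, 2*x = (N:ℚ) := by
    rcases h.1 with ⟨a, b, hxa, _⟩ | ⟨_, a, b, hxa, _⟩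
    · exact ⟨2*a, by rw [hxa]; push_cast; ring⟩
    · exact ⟨2*a+1, by rw [hxa]; push_cast; ring⟩
  have habs : ∀ r c : ℚ, 0 < c → r^2 = c → ∃ R : ℚ, 0 < R ∧ R^2 = c := by
    intro r c hc hr
    refine ⟨|r|, ?_, by rw [sq_abs]; exact hr⟩
    rcases eq_or_ne r 0 with h0 | h0
    · rw [h0] at hr; simp at hr; nlinarith
    · exact abs_pos.mpr h0
  refine ⟨?_, ?_, ?_, ?_⟩
  · rintro ⟨r, hr⟩
    obtain ⟨R, hRpos, hR2⟩ := habs r _ (by linarith) hr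
    have hR0 : R ≠ 0 := ne_of_gt hRpos
    have hxne : x + 1 ≠ 0 := by linarith
    have hu2 : (R/2)^2 = (x+1)/2 := by rw [div_pow, hR2]; ring
    have hv2 : (d:ℚ)*(y/R)^2 = (x-1)/2 := by
      rw [div_pow, hR2]; field_simp; linear_combination hdy
    refine contra' d hd hsf x y (R/2) (y/R) h ?_ ?_ (Or.inl ?_) ?_ ?_ ?_ ?_
    · rw [hu2, hv2]; ring
    · field_simp
    · rw [hu2, hv2]; ring
    · exact ⟨N + 2, by push_cast; rw [hu2]; linear_combination hN⟩
    · exact ⟨N - 2, by push_cast; rw [hv2]; linear_combination hN⟩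
    · positivity
    · positivity
  · rintro ⟨r, hr⟩
    obtain ⟨R, hRpos, hR2⟩ := habs r _ (by linarith) hr
    have hR0 : R ≠ 0 := ne_of_gt hRpos
    have hxne : x - 1 ≠ 0 := by intro h0; nlinarith
    have hu2 : (R/2)^2 = (x-1)/2 := by rw [div_pow, hR2]; ring
    have hv2 : (d:ℚ)*(y/R)^2 = (x+1)/2 := by
      rw [div_pow, hR2]; field_simp; linear_combination hdy
    refine contra' d hd hsf x y (R/2) (y/R) h ?_ ?_ (Or.inr ?_) ?_ ?_ ?_ ?_
    · rw [hu2, hv2]; ring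
    · field_simp
    · rw [hu2, hv2]; ring
    · exact ⟨N - 2, by push_cast; rw [hu2]; linear_combination hN⟩
    · exact ⟨N + 2, by push_cast; rw [hv2]; linear_combination hN⟩
    · positivity
    · positivity
  · rintro ⟨r, hr⟩
    obtain ⟨R, hRpos, hR2⟩ := habs r _ (by positivity) hr
    have hR0 : R ≠ 0 := ne_of_gt hRpos
    have hd0' : (d:ℚ) ≠ 0 := ne_of_gt hd0
    have hxne : x + 1 ≠ 0 := by linarith
    have hu2 : (y*d/R)^2 = (x-1)/2 := by
      rw [div_pow, hR2]; field_simp; linear_combination hdy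
    have hv2 : (d:ℚ)*(R/(2*d))^2 = (x+1)/2 := by
      rw [div_pow, hR2]; field_simp
    refine contra' d hd hsf x y (y*d/R) (R/(2*d)) h ?_ ?_ (Or.inr ?_) ?_ ?_ ?_ ?_
    · rw [hu2, hv2]; ring
    · field_simp
    · rw [hu2, hv2]; ring
    · exact ⟨N - 2, by push_cast; rw [hu2]; linear_combination hN⟩
    · exact ⟨N + 2, by push_cast; rw [hv2]; linear_combination hN⟩
    · positivity
    · positivity
  · rintro ⟨r, hr⟩
    obtain ⟨R, hRpos, hR2⟩ := habs r _ (by nlinarith) hr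
    have hR0 : R ≠ 0 := ne_of_gt hRpos
    have hd0' : (d:ℚ) ≠ 0 := ne_of_gt hd0
    have hxne : x - 1 ≠ 0 := by intro h0; nlinarith
    have hu2 : (y*d/R)^2 = (x+1)/2 := by
      rw [div_pow, hR2]; field_simp; linear_combination hdy
    have hv2 : (d:ℚ)*(R/(2*d))^2 = (x-1)/2 := by
      rw [div_pow, hR2]; field_simp
    refine contra' d hd hsf x y (y*d/R) (R/(2*d)) h ?_ ?_ (Or.inl ?_) ?_ ?_ ?_ ?_
    · rw [hu2, hv2]; ring
    · field_simp
    · rw [hu2, hv2]; ring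
    · exact ⟨N + 2, by push_cast; rw [hu2]; linear_combination hN⟩
    · exact ⟨N - 2, by push_cast; rw [hv2]; linear_combination hN⟩
    · positivity
    · positivity
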